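/- Let [M] be the set of 3×3 real matrices M with diagonal entries m₁₁ = m₂₂ = m₃₃ = 1 and every off-diagonal entry in the interval [0, 1/2], and let [q] be the set of q ∈ ℝ³ with q₁ = −6, q₂ ∈ [1, 2], q₃ ∈ [−3, −2]. Then z̲ = (6, 0, 3) solves LCP(M̲, q̲), where M̲ is the 3×3 identity matrix and q̲ = (−6, 1, −3), and every vector z that solves LCP(M, q) for some M ∈ [M] and q ∈ [q] satisfies z ≤ (6, 0, 3) entrywise. -/
import Mathlib


/-- `z` solves the linear complementarity problem LCP(M, q). -/
def SolvesLCP {n : ℕ} (M : Matrix (Fin n) (Fin n) ℝ) (q z : Fin n → ℝ) : Prop :=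
  (∀ i, 0 ≤ q i + M.mulVec z i) ∧ (∀ i, 0 ≤ z i) ∧ (∑ i, (q i + M.mulVec z i) * z i) = 0

/-- Membership of a 3×3 matrix in the interval matrix of Example 6.2.1:
diagonal entries equal 1, off-diagonal entries in [0, 1/2]. -/
def MemIntervalM (M : Matrix (Fin 3) (Fin 3) ℝ) : Prop :=
  (∀ i, M i i = 1) ∧ (∀ i j, i ≠ j → M i j ∈ Set.Icc (0 : ℝ) (1/2))

/-- Membership of a vector in the interval vector of Example 6.2.1. -/
def MemIntervalQ (q : Fin 3 → ℝ) : Prop :=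
  q 0 = -6 ∧ q 1 ∈ Set.Icc (1 : ℝ) 2 ∧ q 2 ∈ Set.Icc (-3 : ℝ) (-2)

theorem stmt16 :
    SolvesLCP (1 : Matrix (Fin 3) (Fin 3) ℝ) ![-6, 1, -3] ![6, 0, 3] ∧
    ∀ (M : Matrix (Fin 3) (Fin 3) ℝ) (q z : Fin 3 → ℝ),
      MemIntervalM M → MemIntervalQ q → SolvesLCP M q z →
      ∀ i, z i ≤ (![6, 0, 3] : Fin 3 → ℝ) i := by
  constructor
  · refine ⟨?_, ?_, ?_⟩
    · intro i
      simp only [Matrix.one_mulVec]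
      fin_cases i <;> norm_num
    · intro i; fin_cases i <;> norm_num
    · simp [Matrix.one_mulVec, Fin.sum_univ_three]
  · rintro M q z ⟨hMd, hMo⟩ ⟨hq0, hq1, hq2⟩ ⟨hw, hz, hsum⟩
    have e : ∀ i, (q i + M.mulVec z i) * z i = 0 := by
      have := (Finset.sum_eq_zero_iff_of_nonneg (fun i _ =>
        mul_nonneg (hw i) (hz i))).mp hsum
      intro i; exact this i (Finset.mem_univ i)
    have hm01 := hMo 0 1 (by decide)
    have hm02 := hMo 0 2 (by decide)
    have hm10 := hMo 1 0 (by decide)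
    have hm12 := hMo 1 2 (by decide)
    have hm20 := hMo 2 0 (by decide)
    have hm21 := hMo 2 1 (by decide)
    simp only [Set.mem_Icc] at hm01 hm02 hm10 hm12 hm20 hm21 hq1 hq2
    have hd0 := hMd 0
    have hd1 := hMd 1
    have hd2 := hMd 2
    have e0 := e 0
    have e1 := e 1
    have e2 := e 2
    have w0 := hw 0
    have w2 := hw 2
    simp only [Matrix.mulVec, dotProduct, Fin.sum_univ_three, hd0, hd1, hd2] at e0 e1 e2 w0 w2
    have z0 := hz 0
    have z1 := hz 1
    have z2 := hz 2
    have hz1 : z 1 = 0 := by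
      nlinarith [mul_nonneg hm10.1 z0, mul_nonneg hm12.1 z2]
    rw [hq0, hz1] at e0
    rw [hz1] at e2
    intro i
    fin_cases i <;> simp
    · nlinarith [mul_nonneg (mul_nonneg hm02.1 z2) z0]
    · exact le_of_eq hz1
    · nlinarith [mul_nonneg (mul_nonneg hm20.1 z0) z2]
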